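/- For a connected weighted graph with Laplacian Q and resistance matrix Ω, and for every node i, the node resistance curvature satisfies p_i = lim_{t→0⁺} ( 1 − (1/(4t)) · ρ_{t,i}^T Ω ρ_{t,i} ), where ρ_{t,i} := exp(−Qt)·e_i is the heat-kernel distribution started at node i. -/

import Mathlib

open Matrix

variable {V : Type*}

/- The weighted Laplacian matrix of a weighted graph `(V, G, c)`:
`Q i i = ∑_{k ∼ i} c i k`, `Q i j = -c i j` for links `i ∼ j`, and `0` otherwise. -/
open Classical in
noncomputable def lapMatrix [Fintype V] (G : SimpleGraph V) (c : V → V → ℝ) :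
    Matrix V V ℝ :=
  Matrix.of fun i j =>
    if i = j then ∑ k, if G.Adj i k then c i k else 0
    else if G.Adj i j then -c i j else 0

/- The four Penrose equations characterizing the Moore–Penrose pseudoinverse. -/
def IsMoorePenroseInv [Fintype V] (Q Qd : Matrix V V ℝ) : Prop :=
  Q * Qd * Q = Q ∧ Qd * Q * Qd = Qd ∧ (Q * Qd)ᵀ = Q * Qd ∧ (Qd * Q)ᵀ = Qd * Q

/- The effective resistance `ω i j = (e_i - e_j)ᵀ Q† (e_i - e_j)`, computed from a
pseudoinverse `Qd` of the Laplacian. -/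
open Classical in
noncomputable def effRes [Fintype V] (Qd : Matrix V V ℝ) (i j : V) : ℝ :=
  (Pi.single i 1 - Pi.single j 1) ⬝ᵥ Qd *ᵥ (Pi.single i 1 - Pi.single j 1)

/- The node resistance curvature `p i = 1 - (1/2) ∑_{j ∼ i} c i j * ω i j`. -/
open Classical in
noncomputable def nodeCurv [Fintype V] (G : SimpleGraph V) (c : V → V → ℝ)
    (Qd : Matrix V V ℝ) (i : V) : ℝ :=
  1 - 1 / 2 * ∑ j, if G.Adj i j then c i j * effRes Qd i j else 0

/- The resistance matrix `Ω` with entries `(Ω) i j = ω i j`. -/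
noncomputable def resMatrix [Fintype V] (Qd : Matrix V V ℝ) : Matrix V V ℝ :=
  Matrix.of fun i j => effRes Qd i j


section AuxLemmas

lemma exp_entry_hasDerivAt [Fintype V] [DecidableEq V] (A : Matrix V V ℝ) (j k : V) :
    HasDerivAt (fun t : ℝ => NormedSpace.exp (t • A) j k) (A j k) 0 := by
  letI : SeminormedRing (Matrix V V ℝ) := Matrix.linftyOpSemiNormedRing
  letI : NormedRing (Matrix V V ℝ) := Matrix.linftyOpNormedRing
  letI : NormedAlgebra ℝ (Matrix V V ℝ) := Matrix.linftyOpNormedAlgebra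
  have h := hasDerivAt_exp_smul_const (𝕂 := ℝ) A (0 : ℝ)
  rw [zero_smul, NormedSpace.exp_zero, one_mul] at h
  let L : Matrix V V ℝ →L[ℝ] ℝ :=
    LinearMap.toContinuousLinearMap
      ((LinearMap.proj k).comp (LinearMap.proj j : (Matrix V V ℝ) →ₗ[ℝ] (V → ℝ)))
  exact L.hasFDerivAt.comp_hasDerivAt 0 h

lemma effRes_self' [Fintype V] [DecidableEq V] (Qd : Matrix V V ℝ) (i : V) : effRes Qd i i = 0 := by
  simp [effRes]

lemma effRes_comm' [Fintype V] [DecidableEq V] (Qd : Matrix V V ℝ) (i j : V) :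
    effRes Qd i j = effRes Qd j i := by
  unfold effRes
  rw [← neg_sub, Matrix.mulVec_neg, neg_dotProduct, dotProduct_neg, neg_neg]

end AuxLemmas

/- STATEMENT 12: `p_i = lim_{t→0⁺} (1 - (1/(4t)) ρ_{t,i}ᵀ Ω ρ_{t,i})` where
`ρ_{t,i} = exp(-Qt) e_i` is the heat-kernel distribution started at node `i`. -/
theorem nodeCurv_eq_limit_average_distance
    [Fintype V] [DecidableEq V] (G : SimpleGraph V) [DecidableRel G.Adj]
    (c : V → V → ℝ) (hsymm : ∀ i j, c i j = c j i)
    (hpos : ∀ i j, G.Adj i j → 0 < c i j)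
    (hconn : G.Connected)
    (Qd : Matrix V V ℝ) (hQd : IsMoorePenroseInv (lapMatrix G c) Qd)
    (i : V) :
    Filter.Tendsto
      (fun t : ℝ =>
        1 - 1 / (4 * t) *
          ((NormedSpace.exp (-(t • lapMatrix G c)) *ᵥ Pi.single i 1) ⬝ᵥ
            resMatrix Qd *ᵥ (NormedSpace.exp (-(t • lapMatrix G c)) *ᵥ Pi.single i 1)))
      (nhdsWithin 0 (Set.Ioi 0)) (nhds (nodeCurv G c Qd i)) := by
  classical
  set Q := lapMatrix G c with hQ
  set Ω := resMatrix Qd with hΩ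
  set S : ℝ := ∑ j, if G.Adj i j then c i j * effRes Qd i j else 0 with hS
  -- the quadratic form as a double sum of entries
  set F : ℝ → ℝ := fun t =>
    ∑ j, ∑ k, (NormedSpace.exp (t • (-Q))) j i * (Ω j k * (NormedSpace.exp (t • (-Q))) k i)
    with hF
  have hfun : ∀ t : ℝ,
      ((NormedSpace.exp (-(t • Q)) *ᵥ Pi.single i 1) ⬝ᵥ
        Ω *ᵥ (NormedSpace.exp (-(t • Q)) *ᵥ Pi.single i 1)) = F t := by
    intro t
    have hsm : -(t • Q) = t • (-Q) := by rw [smul_neg]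
    have hu : (NormedSpace.exp (t • (-Q)) *ᵥ Pi.single i 1)
        = fun j => NormedSpace.exp (t • (-Q)) j i := by
      funext j
      simp [mulVec, dotProduct, Pi.single_apply]
    rw [hsm, hu]
    simp only [hF, dotProduct, mulVec, Finset.mul_sum]
  -- derivative of F at 0
  have hD : HasDerivAt F
      (∑ j, ∑ k, ((-Q) j i * (Ω j k * (1 : Matrix V V ℝ) k i)
        + (1 : Matrix V V ℝ) j i * (Ω j k * (-Q) k i))) 0 := by
    apply HasDerivAt.fun_sum
    intro j _
    apply HasDerivAt.fun_sum
    intro k _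
    have h1 := exp_entry_hasDerivAt (-Q) j i
    have h2 := (exp_entry_hasDerivAt (-Q) k i).const_mul (Ω j k)
    have h3 := h1.fun_mul h2
    simpa only [zero_smul, NormedSpace.exp_zero] using h3
  -- the derivative value is 2 * S
  have hterm1 : ∀ j, (-Q) j i * Ω j i = if G.Adj i j then c i j * effRes Qd i j else 0 := by
    intro j
    by_cases hj : j = i
    · subst hj
      simp [hΩ, resMatrix, effRes_self', G.irrefl]
    · have hQji : Q j i = if G.Adj j i then -c j i else 0 := by
        simp [hQ, lapMatrix, hj]
      by_cases hadj : G.Adj i j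
      · have hadj' : G.Adj j i := hadj.symm
        rw [Matrix.neg_apply, hQji, if_pos hadj', if_pos hadj]
        have : Ω j i = effRes Qd i j := by
          rw [hΩ]; show effRes Qd j i = effRes Qd i j; exact (effRes_comm' Qd i j).symm
        rw [this, hsymm j i]
        ring
      · have hadj' : ¬ G.Adj j i := fun h => hadj h.symm
        rw [Matrix.neg_apply, hQji, if_neg hadj', if_neg hadj]
        simp
  have hterm2 : ∀ k, Ω i k * (-Q) k i = if G.Adj i k then c i k * effRes Qd i k else 0 := by
    intro k
    by_cases hk : k = i
    · subst hk
      simp [hΩ, resMatrix, effRes_self', G.irrefl]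
    · have hQki : Q k i = if G.Adj k i then -c k i else 0 := by
        simp [hQ, lapMatrix, hk]
      by_cases hadj : G.Adj i k
      · have hadj' : G.Adj k i := hadj.symm
        rw [Matrix.neg_apply, hQki, if_pos hadj', if_pos hadj]
        have : Ω i k = effRes Qd i k := by rw [hΩ]; rfl
        rw [this, hsymm k i]
        ring
      · have hadj' : ¬ G.Adj k i := fun h => hadj h.symm
        rw [Matrix.neg_apply, hQki, if_neg hadj', if_neg hadj]
        simp
  have hDval : (∑ j, ∑ k, ((-Q) j i * (Ω j k * (1 : Matrix V V ℝ) k i)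
      + (1 : Matrix V V ℝ) j i * (Ω j k * (-Q) k i))) = 2 * S := by
    have e1 : (∑ j, ∑ k, (-Q) j i * (Ω j k * (1 : Matrix V V ℝ) k i))
        = ∑ j, (-Q) j i * Ω j i := by
      refine Finset.sum_congr rfl fun j _ => ?_
      simp [Matrix.one_apply, mul_ite]
    have e2 : (∑ j, ∑ k, (1 : Matrix V V ℝ) j i * (Ω j k * (-Q) k i))
        = ∑ k, Ω i k * (-Q) k i := by
      rw [Finset.sum_comm]
      refine Finset.sum_congr rfl fun k _ => ?_
      simp [Matrix.one_apply, ite_mul]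
    calc (∑ j, ∑ k, ((-Q) j i * (Ω j k * (1 : Matrix V V ℝ) k i)
          + (1 : Matrix V V ℝ) j i * (Ω j k * (-Q) k i)))
        = (∑ j, ∑ k, (-Q) j i * (Ω j k * (1 : Matrix V V ℝ) k i))
          + ∑ j, ∑ k, (1 : Matrix V V ℝ) j i * (Ω j k * (-Q) k i) := by
          rw [← Finset.sum_add_distrib]
          exact Finset.sum_congr rfl fun j _ => by rw [← Finset.sum_add_distrib]
      _ = (∑ j, (-Q) j i * Ω j i) + ∑ k, Ω i k * (-Q) k i := by rw [e1, e2]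
      _ = S + S := by
          rw [Finset.sum_congr rfl fun j _ => hterm1 j,
            Finset.sum_congr rfl fun k _ => hterm2 k, hS]
      _ = 2 * S := by ring
  rw [hDval] at hD
  -- F 0 = 0
  have hF0 : F 0 = 0 := by
    simp only [hF, zero_smul, NormedSpace.exp_zero, Matrix.one_apply, mul_ite, ite_mul,
      mul_one, mul_zero, one_mul, zero_mul, Finset.sum_ite_eq, Finset.sum_ite_eq',
      Finset.mem_univ, if_true]
    simp [hΩ, resMatrix, effRes_self']
  -- pass to the slope
  have hslope : Filter.Tendsto (slope F 0) (nhdsWithin 0 (Set.Ioi 0)) (nhds (2 * S)) :=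
    (hasDerivAt_iff_tendsto_slope.mp hD).mono_left
      (nhdsWithin_mono 0 fun t ht => ne_of_gt ht)
  have hlim : Filter.Tendsto (fun t : ℝ => 1 - 1 / 4 * slope F 0 t)
      (nhdsWithin 0 (Set.Ioi 0)) (nhds (1 - 1 / 4 * (2 * S))) :=
    Filter.Tendsto.sub tendsto_const_nhds (hslope.const_mul (1 / 4))
  have hval : (1 : ℝ) - 1 / 4 * (2 * S) = nodeCurv G c Qd i := by
    rw [nodeCurv, hS]
    have : (∑ j, if G.Adj i j then c i j * effRes Qd i j else 0)
        = ∑ j, (haveI := Classical.propDecidable (G.Adj i j);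
            if G.Adj i j then c i j * effRes Qd i j else 0) := by
      refine Finset.sum_congr rfl fun j _ => ?_
      congr!
    rw [this]
    ring_nf
  rw [← hval]
  refine hlim.congr' ?_
  filter_upwards [self_mem_nhdsWithin] with t ht
  have ht0 : (t : ℝ) ≠ 0 := ne_of_gt ht
  rw [hfun t, slope_def_field, hF0]
  field_simp
  ring
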